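/- For every real ρ_s with 0 < ρ_s < 1/2, the function α ↦ f^Acc(α, ρ_s), restricted to α ≥ 0, has right derivative at α = 0 equal to (1/2)·ln(4·ρ_s·(1-ρ_s)), and this value is strictly negative. Consequently d/dα f^Acc(α,ρ_s)|_{α=0} ≤ -C for the positive constant C = -(1/2)·ln(4·ρ_s·(1-ρ_s)). -/

import Mathlib

/-- Binary entropy function with natural logarithm (`Real.log 0 = 0` gives `H 0 = H 1 = 0`). -/
noncomputable def H (x : ℝ) : ℝ := -x * Real.log x - (1 - x) * Real.log (1 - x)

/-- Asymptotic input-output weight distribution of the rate-1 accumulator. -/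
noncomputable def fAcc (α β : ℝ) : ℝ :=
  (1 - β) * H (α / (2 * (1 - β))) + β * H (α / (2 * β)) - H α

lemma aux_log (c : ℝ) (hc : 0 < c) :
    HasDerivAt (fun α : ℝ => (c - α / 2) * Real.log (1 - α / (2 * c))) (-(1/2)) 0 := by
  have h1 : HasDerivAt (fun α : ℝ => 1 - α / (2 * c)) (-(1 / (2 * c))) 0 := by
    simpa using ((hasDerivAt_id (0:ℝ)).div_const (2*c)).const_sub 1
  have h2 := h1.log (by norm_num)
  have h3 : HasDerivAt (fun α : ℝ => c - α / 2) (-(1/2)) 0 := by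
    simpa using ((hasDerivAt_id (0:ℝ)).div_const 2).const_sub c
  have h4 := h3.fun_mul h2
  refine h4.congr_deriv ?_
  field_simp
  ring_nf
  simp [hc.ne']

lemma aux_log2 : HasDerivAt (fun α : ℝ => (1 - α) * Real.log (1 - α)) (-1) 0 := by
  have h1 : HasDerivAt (fun α : ℝ => 1 - α) (-1) 0 := by
    simpa using (hasDerivAt_id (0:ℝ)).const_sub 1
  have h2 := h1.log (by norm_num)
  have h4 := h1.fun_mul h2
  refine h4.congr_deriv ?_
  norm_num

theorem stmt_16 (ρs : ℝ) (h0 : 0 < ρs) (h1 : ρs < 1 / 2) :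
    HasDerivWithinAt (fun α => fAcc α ρs)
      ((1 / 2) * Real.log (4 * ρs * (1 - ρs))) (Set.Ici 0) 0 ∧
    (1 / 2) * Real.log (4 * ρs * (1 - ρs)) < 0 := by
  have hb : 0 < 1 - ρs := by linarith
  set L := Real.log (4 * ρs * (1 - ρs)) with hLdef
  constructor
  · have key : HasDerivAt (fun α : ℝ => α / 2 * L
        - (1 - ρs - α / 2) * Real.log (1 - α / (2 * (1 - ρs)))
        - (ρs - α / 2) * Real.log (1 - α / (2 * ρs))
        + (1 - α) * Real.log (1 - α)) ((1/2) * L) 0 := by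
      have hA : HasDerivAt (fun α : ℝ => α / 2 * L) (1/2 * L) 0 := by
        simpa using ((hasDerivAt_id (0:ℝ)).div_const 2).mul_const L
      have := ((hA.sub (aux_log (1 - ρs) hb)).sub (aux_log ρs h0)).add aux_log2
      refine this.congr_deriv ?_
      ring
    refine key.hasDerivWithinAt.congr ?_ ?_
    · intro α hα
      rcases eq_or_lt_of_le (Set.mem_Ici.mp hα) with rfl | hpos
      · simp [fAcc, H]
      · have e1 : Real.log (α / (2 * (1 - ρs))) = Real.log α - Real.log (2 * (1 - ρs)) :=
          Real.log_div hpos.ne' (by positivity)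
        have e2 : Real.log (α / (2 * ρs)) = Real.log α - Real.log (2 * ρs) :=
          Real.log_div hpos.ne' (by positivity)
        have e3 : L = Real.log (2 * ρs) + Real.log (2 * (1 - ρs)) := by
          rw [hLdef, ← Real.log_mul (by positivity) (by positivity)]
          ring_nf
        simp only [fAcc, H, e1, e2, e3]
        field_simp
        ring
    · simp [fAcc, H]
  · have h4 : 4 * ρs * (1 - ρs) < 1 := by nlinarith
    have := Real.log_neg (by positivity) h4
    linarith
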